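/- Let H ∈ (0,1/2) and 0 < s < t ≤ T. Then C_H Γ(H+1/2) s^{1/2−H} (D^{1/2−H}_{T−}( u ↦ u^{H−1/2} 1_{[0,t]}(u) ))(s) = K_H(t,s). In other words, the operator K defined by (Kφ)(s) = C_H Γ(H+1/2) s^{1/2−H} (D^{1/2−H}_{T−}(u^{H−1/2}φ(u)))(s) satisfies K(1_{[0,t]}) = K_H(t,·)1_{[0,t]} on (0,t). -/

import Mathlib

open MeasureTheory Set

/-- The Beta function `B(a,b) = Γ(a)Γ(b)/Γ(a+b)`. -/
noncomputable def betaFn (a b : ℝ) : ℝ := Real.Gamma a * Real.Gamma b / Real.Gamma (a + b)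

/-- The normalizing constant `C_H = sqrt( 2H / ((1-2H) B(1-2H, H+1/2)) )`. -/
noncomputable def CH (H : ℝ) : ℝ :=
  Real.sqrt (2 * H / ((1 - 2 * H) * betaFn (1 - 2 * H) (H + 1 / 2)))

/-- The fractional Brownian motion kernel `K_H(t,s)` for `H ∈ (0,1/2)`, `0 < s < t`. -/
noncomputable def fbmKernel (H t s : ℝ) : ℝ :=
  CH H * ((t / s) ^ (H - 1 / 2) * (t - s) ^ (H - 1 / 2) -
    (H - 1 / 2) * s ^ (1 / 2 - H) *
      ∫ u in Set.Ioo s t, u ^ (H - 3 / 2) * (u - s) ^ (H - 1 / 2))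

/-- Right-sided fractional derivative of order `α` on `[0,T]`:
`(D^α_{T-} f)(s) = (1/Γ(1-α)) ( f(s)/(T-s)^α + α ∫_s^T (f(s)-f(u))/(u-s)^{1+α} du )`. -/
noncomputable def fracDerRight (T α : ℝ) (f : ℝ → ℝ) (s : ℝ) : ℝ :=
  (1 / Real.Gamma (1 - α)) *
    (f s / (T - s) ^ α + α * ∫ u in Set.Ioo s T, (f s - f u) / (u - s) ^ (1 + α))

/-- The transfer operator `(Kφ)(s) = C_H Γ(H+1/2) s^{1/2-H} D^{1/2-H}_{T-}(u ↦ u^{H-1/2} φ(u))(s)`. -/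
noncomputable def Kop (T H : ℝ) (φ : ℝ → ℝ) (s : ℝ) : ℝ :=
  CH H * Real.Gamma (H + 1 / 2) * s ^ (1 / 2 - H) *
    fracDerRight T (1 / 2 - H) (fun u => u ^ (H - 1 / 2) * φ u) s


section AuxFbm
variable {a s t T : ℝ}

private lemma hasDerivAt_shift_rpow {s u : ℝ} (hu : s < u) (a : ℝ) :
    HasDerivAt (fun x : ℝ => (x - s) ^ a) (a * (u - s) ^ (a - 1)) u := by
  have h1 : HasDerivAt (fun x : ℝ => x - s) 1 u := (hasDerivAt_id u).sub_const s
  have h2 := Real.hasDerivAt_rpow_const (x := u - s) (p := a)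
    (Or.inl (ne_of_gt (sub_pos.2 hu)))
  simpa [Function.comp_def] using h2.comp u h1

private lemma mul_rpow_sub_one {x : ℝ} (hx : 0 < x) (a : ℝ) :
    x * x ^ (a - 1) = x ^ a := by
  rw [show a = 1 + (a - 1) by ring, Real.rpow_add hx, Real.rpow_one]
  ring_nf

private lemma integrableOn_shift_rpow (ha : -1 < a) (s t : ℝ) :
    IntegrableOn (fun u : ℝ => (u - s) ^ a) (Ioo s t) := by
  rcases le_or_gt t s with h | h
  · rw [Ioo_eq_empty (by exact fun hlt => absurd (hlt.trans_le h) (lt_irrefl s))]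
    simp
  · have h0 := (intervalIntegral.intervalIntegrable_rpow' (a := 0) (b := t - s) ha).comp_sub_right s
    simp only [zero_add, sub_add_cancel] at h0
    exact (intervalIntegrable_iff_integrableOn_Ioo_of_le h.le).1 h0

private lemma integrableOn_of_le_shift_rpow (ha : -1 < a) {g : ℝ → ℝ} {C : ℝ}
    (hg : ContinuousOn g (Ioo s t)) (hbd : ∀ u ∈ Ioo s t, |g u| ≤ C * (u - s) ^ a) :
    IntegrableOn g (Ioo s t) := by
  have hmeas : AEStronglyMeasurable g (volume.restrict (Ioo s t)) :=
    hg.aestronglyMeasurable measurableSet_Ioo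
  have hint : IntegrableOn (fun u : ℝ => C * (u - s) ^ a) (Ioo s t) :=
    (integrableOn_shift_rpow ha s t).const_mul C
  refine hint.mono' hmeas ?_
  filter_upwards [ae_restrict_mem measurableSet_Ioo] with u hu
  exact hbd u hu

private lemma rpow_sub_le (hs : 0 < s) (ha : a < 0) {u : ℝ} (hu : s ≤ u) :
    |s ^ a - u ^ a| ≤ -a * s ^ (a - 1) * (u - s) := by
  have key : ∀ x ∈ Ici s, HasDerivWithinAt (fun y : ℝ => y ^ a)
      ((fun x : ℝ => a * x ^ (a - 1)) x) (Ici s) x := fun x hx =>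
    (Real.hasDerivAt_rpow_const (Or.inl (ne_of_gt (hs.trans_le hx)))).hasDerivWithinAt
  have hb : ∀ x ∈ Ici s, ‖a * x ^ (a - 1)‖ ≤ -a * s ^ (a - 1) := by
    intro x hx
    rw [norm_mul, Real.norm_eq_abs, Real.norm_eq_abs, abs_of_neg ha,
      abs_of_pos (Real.rpow_pos_of_pos (hs.trans_le hx) _)]
    have h1 : x ^ (a - 1) ≤ s ^ (a - 1) :=
      Real.rpow_le_rpow_of_nonpos hs hx (by linarith)
    nlinarith [neg_pos.2 ha]
  have h := (convex_Ici s).norm_image_sub_le_of_norm_hasDerivWithin_le key hb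
    (self_mem_Ici) hu
  rw [Real.norm_eq_abs, Real.norm_eq_abs, abs_of_nonneg (by linarith : (0:ℝ) ≤ u - s)] at h
  calc |s ^ a - u ^ a| = |u ^ a - s ^ a| := abs_sub_comm _ _
    _ ≤ -a * s ^ (a - 1) * (u - s) := h

private lemma core_fbm (ha1 : -1 < a) (ha0 : a < 0) (hs : 0 < s) (hst : s < t)
    (htT : t ≤ T) :
    s ^ (-a) * (s ^ a * (Icc (0:ℝ) t).indicator (fun _ => (1:ℝ)) s / (T - s) ^ (-a) +
      -a * ∫ u in Ioo s T,
        (s ^ a * (Icc (0:ℝ) t).indicator (fun _ => (1:ℝ)) s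
          - u ^ a * (Icc (0:ℝ) t).indicator (fun _ => (1:ℝ)) u) / (u - s) ^ (1 + -a))
    = (t / s) ^ a * (t - s) ^ a
      - a * s ^ (-a) * ∫ u in Ioo s t, u ^ (a - 1) * (u - s) ^ a := by
  have haz : a ≠ 0 := ne_of_lt ha0
  have hts : (0:ℝ) < t - s := sub_pos.2 hst
  have hsT : s < T := hst.trans_le htT
  have hTs : (0:ℝ) < T - s := sub_pos.2 hsT
  simp only [indicator_of_mem (show s ∈ Icc (0:ℝ) t from ⟨hs.le, hst.le⟩), mul_one]
  set ind : ℝ → ℝ := (Icc (0:ℝ) t).indicator (fun _ => (1:ℝ)) with hind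
  -- pointwise identification of the integrand on the two pieces
  have key₁ : ∀ u ∈ Ioo s t,
      (s ^ a - u ^ a * ind u) / (u - s) ^ (1 + -a)
        = (s ^ a - u ^ a) * (u - s) ^ (a - 1) := by
    intro u hu
    have hu0 : (0:ℝ) < u - s := sub_pos.2 hu.1
    rw [hind, indicator_of_mem (show u ∈ Icc (0:ℝ) t from ⟨(hs.trans hu.1).le, hu.2.le⟩),
      mul_one, div_eq_mul_inv, ← Real.rpow_neg hu0.le, show -(1 + -a) = a - 1 by ring]
  have key₂ : ∀ u ∈ Ioo t T,
      (s ^ a - u ^ a * ind u) / (u - s) ^ (1 + -a)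
        = s ^ a * (u - s) ^ (a - 1) := by
    intro u hu
    have hu0 : (0:ℝ) < u - s := sub_pos.2 (hst.trans hu.1)
    rw [hind, indicator_of_notMem (fun h => absurd h.2 (not_le.2 hu.1)), mul_zero, sub_zero,
      div_eq_mul_inv, ← Real.rpow_neg hu0.le, show -(1 + -a) = a - 1 by ring]
  -- integrability of the two core functions on (s,t)
  have hC1 : ContinuousOn (fun u : ℝ => (s ^ a - u ^ a) * (u - s) ^ (a - 1)) (Ioo s t) := by
    intro u hu
    exact ((continuousAt_const.sub
        (continuousAt_id.rpow_const (Or.inl (hs.trans hu.1).ne'))).mul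
      ((continuousAt_id.sub continuousAt_const).rpow_const
        (Or.inl (sub_pos.2 hu.1).ne'))).continuousWithinAt
  have hbd1 : ∀ u ∈ Ioo s t,
      |(s ^ a - u ^ a) * (u - s) ^ (a - 1)| ≤ (-a * s ^ (a - 1)) * (u - s) ^ a := by
    intro u hu
    have hu0 : (0:ℝ) < u - s := sub_pos.2 hu.1
    rw [abs_mul, abs_of_pos (Real.rpow_pos_of_pos hu0 _)]
    calc |s ^ a - u ^ a| * (u - s) ^ (a - 1)
        ≤ (-a * s ^ (a - 1) * (u - s)) * (u - s) ^ (a - 1) :=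
          mul_le_mul_of_nonneg_right (rpow_sub_le hs ha0 hu.1.le)
            (Real.rpow_pos_of_pos hu0 _).le
      _ = (-a * s ^ (a - 1)) * (u - s) ^ a := by
          rw [mul_assoc, mul_rpow_sub_one hu0]
  have hintF₁ : IntegrableOn (fun u : ℝ => (s ^ a - u ^ a) * (u - s) ^ (a - 1)) (Ioo s t) :=
    integrableOn_of_le_shift_rpow ha1 hC1 hbd1
  have hC2 : ContinuousOn (fun u : ℝ => u ^ (a - 1) * (u - s) ^ a) (Ioo s t) := by
    intro u hu
    exact ((continuousAt_id.rpow_const (Or.inl (hs.trans hu.1).ne')).mul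
      ((continuousAt_id.sub continuousAt_const).rpow_const
        (Or.inl (sub_pos.2 hu.1).ne'))).continuousWithinAt
  have hbd2 : ∀ u ∈ Ioo s t,
      |u ^ (a - 1) * (u - s) ^ a| ≤ s ^ (a - 1) * (u - s) ^ a := by
    intro u hu
    have hu0 : (0:ℝ) < u - s := sub_pos.2 hu.1
    rw [abs_mul, abs_of_pos (Real.rpow_pos_of_pos hu0 _),
      abs_of_pos (Real.rpow_pos_of_pos (hs.trans hu.1) _)]
    exact mul_le_mul_of_nonneg_right
      (Real.rpow_le_rpow_of_nonpos hs hu.1.le (by linarith))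
      (Real.rpow_pos_of_pos hu0 _).le
  have hintF₂ : IntegrableOn (fun u : ℝ => u ^ (a - 1) * (u - s) ^ a) (Ioo s t) :=
    integrableOn_of_le_shift_rpow ha1 hC2 hbd2
  -- the antiderivative G and the fundamental theorem of calculus on [s,t]
  have hGd : ∀ u ∈ Ioo s t, HasDerivAt (fun u : ℝ => (s ^ a - u ^ a) * (u - s) ^ a)
      (a * ((s ^ a - u ^ a) * (u - s) ^ (a - 1)) - a * (u ^ (a - 1) * (u - s) ^ a)) u := by
    intro u hu
    have d1 : HasDerivAt (fun x : ℝ => s ^ a - x ^ a) (-(a * u ^ (a - 1))) u :=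
      (Real.hasDerivAt_rpow_const (Or.inl (hs.trans hu.1).ne')).const_sub (s ^ a)
    have d2 := hasDerivAt_shift_rpow hu.1 a
    have h := d1.mul d2
    exact h.congr_deriv (by ring)
  have hGc : ContinuousOn (fun u : ℝ => (s ^ a - u ^ a) * (u - s) ^ a) (Icc s t) := by
    intro u hu
    rcases eq_or_lt_of_le hu.1 with heq | hlt
    · subst heq
      have hG0 : ((fun u : ℝ => (s ^ a - u ^ a) * (u - s) ^ a) s) = 0 := by simp
      unfold ContinuousWithinAt
      rw [hG0]
      apply squeeze_zero_norm'
        (a := fun u : ℝ => (-a * s ^ (a - 1)) * (u - s) ^ (a + 1))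
      · filter_upwards [self_mem_nhdsWithin] with u hu
        rcases eq_or_lt_of_le hu.1 with heq | hlt
        · subst heq
          simp [Real.zero_rpow (show a + 1 ≠ 0 by linarith)]
        · have hu0 : (0:ℝ) < u - s := sub_pos.2 hlt
          have hp : (u - s) ^ (a + 1) = (u - s) ^ a * (u - s) := by
            rw [Real.rpow_add hu0, Real.rpow_one]
          rw [Real.norm_eq_abs, abs_mul, abs_of_pos (Real.rpow_pos_of_pos hu0 _), hp]
          calc |s ^ a - u ^ a| * (u - s) ^ a
              ≤ (-a * s ^ (a - 1) * (u - s)) * (u - s) ^ a :=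
                mul_le_mul_of_nonneg_right (rpow_sub_le hs ha0 hlt.le)
                  (Real.rpow_pos_of_pos hu0 _).le
            _ = (-a * s ^ (a - 1)) * ((u - s) ^ a * (u - s)) := by ring
      · have hc : ContinuousAt (fun u : ℝ => (-a * s ^ (a - 1)) * (u - s) ^ (a + 1)) s :=
          continuousAt_const.mul ((continuousAt_id.sub continuousAt_const).rpow_const
            (Or.inr (by linarith)))
        have := hc.continuousWithinAt (s := Icc s t)
        unfold ContinuousWithinAt at this
        simpa [Real.zero_rpow (show a + 1 ≠ 0 by linarith)] using this
    · exact ((continuousAt_const.sub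
          (continuousAt_id.rpow_const (Or.inl (hs.trans hlt).ne'))).mul
        ((continuousAt_id.sub continuousAt_const).rpow_const
          (Or.inl (sub_pos.2 hlt).ne'))).continuousWithinAt
  have hii1 : IntervalIntegrable (fun u : ℝ => a * ((s ^ a - u ^ a) * (u - s) ^ (a - 1)))
      volume s t := by
    rw [intervalIntegrable_iff_integrableOn_Ioo_of_le hst.le]
    exact hintF₁.const_mul a
  have hii2 : IntervalIntegrable (fun u : ℝ => a * (u ^ (a - 1) * (u - s) ^ a))
      volume s t := by
    rw [intervalIntegrable_iff_integrableOn_Ioo_of_le hst.le]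
    exact hintF₂.const_mul a
  have hftc := intervalIntegral.integral_eq_sub_of_hasDeriv_right_of_le hst.le hGc
    (fun x hx => (hGd x hx).hasDerivWithinAt) ((hii1.sub hii2))
  rw [intervalIntegral.integral_sub hii1 hii2, intervalIntegral.integral_const_mul,
    intervalIntegral.integral_const_mul,
    intervalIntegral.integral_of_le hst.le, intervalIntegral.integral_of_le hst.le,
    integral_Ioc_eq_integral_Ioo, integral_Ioc_eq_integral_Ioo] at hftc
  have hGs0 : (s ^ a - s ^ a) * (s - s) ^ a = 0 := by simp
  rw [hGs0, sub_zero] at hftc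
  -- hftc : a * ∫ F₁ - a * ∫ F₂ = (s^a - t^a) * (t-s)^a
  -- the integral over (t,T)
  have hI2 : ∫ u in Ioo t T, s ^ a * (u - s) ^ (a - 1)
      = s ^ a * (((T - s) ^ a - (t - s) ^ a) / a) := by
    rw [integral_const_mul]
    congr 1
    rcases eq_or_lt_of_le htT with rfl | htT'
    · simp
    · rw [← integral_Ioc_eq_integral_Ioo, ← intervalIntegral.integral_of_le htT'.le]
      have hd : ∀ x ∈ uIcc t T, HasDerivAt (fun u : ℝ => (u - s) ^ a / a)
          ((x - s) ^ (a - 1)) x := by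
        intro x hx
        rw [uIcc_of_le htT'.le] at hx
        have h := (hasDerivAt_shift_rpow (hst.trans_le hx.1) a).div_const a
        simpa [mul_div_cancel_left₀ _ haz] using h
      have hci : IntervalIntegrable (fun x : ℝ => (x - s) ^ (a - 1)) volume t T := by
        apply ContinuousOn.intervalIntegrable
        intro x hx
        rw [uIcc_of_le htT'.le] at hx
        exact ((continuousAt_id.sub continuousAt_const).rpow_const
          (Or.inl (sub_pos.2 (hst.trans_le hx.1)).ne')).continuousWithinAt
      rw [intervalIntegral.integral_eq_sub_of_hasDerivAt hd hci]
      ring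
  -- splitting the integral over (s,T)
  have hintΦ₁ : IntegrableOn
      (fun u : ℝ => (s ^ a - u ^ a * ind u) / (u - s) ^ (1 + -a)) (Ioo s t) :=
    hintF₁.congr_fun (fun u hu => (key₁ u hu).symm) measurableSet_Ioo
  have hintΦ₂ : IntegrableOn
      (fun u : ℝ => (s ^ a - u ^ a * ind u) / (u - s) ^ (1 + -a)) (Ico t T) := by
    rw [integrableOn_Ico_iff_integrableOn_Ioo]
    have hcont : ContinuousOn (fun u : ℝ => s ^ a * (u - s) ^ (a - 1)) (Icc t T) := by
      intro x hx
      exact (continuousAt_const.mul ((continuousAt_id.sub continuousAt_const).rpow_const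
        (Or.inl (sub_pos.2 (hst.trans_le hx.1)).ne'))).continuousWithinAt
    exact (hcont.integrableOn_Icc.mono_set Ioo_subset_Icc_self).congr_fun
      (fun u hu => (key₂ u hu).symm) measurableSet_Ioo
  have hsplit : (∫ u in Ioo s T, (s ^ a - u ^ a * ind u) / (u - s) ^ (1 + -a))
      = (∫ u in Ioo s t, (s ^ a - u ^ a) * (u - s) ^ (a - 1))
        + s ^ a * (((T - s) ^ a - (t - s) ^ a) / a) := by
    rw [← Ioo_union_Ico_eq_Ioo hst htT,
      setIntegral_union (Set.disjoint_left.mpr fun u hu hu' => absurd hu.2 (not_lt.2 hu'.1))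
        measurableSet_Ico hintΦ₁ hintΦ₂]
    congr 1
    · exact setIntegral_congr_fun measurableSet_Ioo key₁
    · rw [integral_Ico_eq_integral_Ioo, setIntegral_congr_fun measurableSet_Ioo key₂]
      exact hI2
  rw [hsplit]
  -- final algebra
  have hA : s ^ a ≠ 0 := (Real.rpow_pos_of_pos hs a).ne'
  have hQ : (T - s) ^ a ≠ 0 := (Real.rpow_pos_of_pos hTs a).ne'
  rw [Real.rpow_neg hs.le, Real.rpow_neg hTs.le, Real.div_rpow (le_of_lt (hs.trans hst)) hs.le]
  have hI₁ : (∫ u in Ioo s t, (s ^ a - u ^ a) * (u - s) ^ (a - 1))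
      = ((s ^ a - t ^ a) * (t - s) ^ a + a * ∫ u in Ioo s t, u ^ (a - 1) * (u - s) ^ a) / a := by
    field_simp
    linarith [hftc]
  rw [hI₁]
  field_simp
  ring

end AuxFbm

/-- For `H ∈ (0,1/2)` and `0 < s < t ≤ T`, the transfer operator applied to the
indicator of `[0,t]` reproduces the fBm kernel: `K(1_{[0,t]})(s) = K_H(t,s)`. -/
theorem stmt_2 (H T s t : ℝ) (hH : H ∈ Set.Ioo (0 : ℝ) (1 / 2))
    (hs : 0 < s) (hst : s < t) (htT : t ≤ T) :
    Kop T H (Set.indicator (Set.Icc 0 t) (fun _ => 1)) s = fbmKernel H t s := by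

  obtain ⟨hH0, hH2⟩ := hH
  have hΓ : Real.Gamma (H + 1 / 2) ≠ 0 := (Real.Gamma_pos_of_pos (by linarith)).ne'
  have hcore := core_fbm (a := H - 1 / 2) (by linarith) (by linarith) hs hst htT
  simp only [Kop, fracDerRight, fbmKernel]
  rw [show (1:ℝ) - (1 / 2 - H) = H + 1 / 2 by ring,
    show (1:ℝ) / 2 - H = -(H - 1 / 2) by ring,
    show H - 3 / 2 = (H - 1 / 2) - 1 by ring, ← hcore]
  field_simp
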